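/- Let f_λ(p) and f_u(p) denote the ridge and unregularized reduced objectives for a continuous matrix family M(p) with uniform full column rank on a compact set 𝒫. If λ_k ↓ 0 and p_k minimizes f_{λ_k}, then f_u(p_k) → min_{p∈𝒫} f_u(p) as k → ∞. -/
import Mathlib


open Matrix Filter Topology

noncomputable def sqnorm {k : ℕ} (v : Fin k → ℝ) : ℝ := ∑ i, v i ^ 2

noncomputable def ridgeMin {n m : ℕ} (A : Matrix (Fin n) (Fin m) ℝ)
    (y : Fin n → ℝ) (lam : ℝ) : ℝ :=
  ⨅ w : Fin m → ℝ, ((1 / 2) * sqnorm (A *ᵥ w - y) + (lam / 2) * sqnorm w)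

noncomputable def lsqMin {n m : ℕ} (A : Matrix (Fin n) (Fin m) ℝ)
    (y : Fin n → ℝ) : ℝ :=
  ⨅ w : Fin m → ℝ, (1 / 2) * sqnorm (A *ᵥ w - y)

lemma sqnorm_nonneg {k : ℕ} (v : Fin k → ℝ) : 0 ≤ sqnorm v :=
  Finset.sum_nonneg fun i _ => sq_nonneg _

lemma lsq_bdd {n m : ℕ} (A : Matrix (Fin n) (Fin m) ℝ) (y : Fin n → ℝ) :
    BddBelow (Set.range fun w : Fin m → ℝ => (1 / 2) * sqnorm (A *ᵥ w - y)) := by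
  refine ⟨0, ?_⟩
  rintro x ⟨w, rfl⟩
  have := sqnorm_nonneg (A *ᵥ w - y)
  positivity

lemma ridge_bdd {n m : ℕ} (A : Matrix (Fin n) (Fin m) ℝ) (y : Fin n → ℝ) {lam : ℝ}
    (hlam : 0 ≤ lam) :
    BddBelow (Set.range fun w : Fin m → ℝ =>
      ((1 / 2) * sqnorm (A *ᵥ w - y) + (lam / 2) * sqnorm w)) := by
  refine ⟨0, ?_⟩
  rintro x ⟨w, rfl⟩
  have h1 := sqnorm_nonneg (A *ᵥ w - y)
  have h2 := sqnorm_nonneg w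
  positivity

lemma lsqMin_nonneg {n m : ℕ} (A : Matrix (Fin n) (Fin m) ℝ) (y : Fin n → ℝ) :
    0 ≤ lsqMin A y := by
  refine le_ciInf fun w => ?_
  have := sqnorm_nonneg (A *ᵥ w - y)
  positivity

lemma lsqMin_le_ridgeMin {n m : ℕ} (A : Matrix (Fin n) (Fin m) ℝ) (y : Fin n → ℝ)
    {lam : ℝ} (hlam : 0 ≤ lam) : lsqMin A y ≤ ridgeMin A y lam := by
  refine ciInf_mono (lsq_bdd A y) fun w => ?_
  have := sqnorm_nonneg w
  nlinarith

lemma ridgeMin_le {n m : ℕ} (A : Matrix (Fin n) (Fin m) ℝ) (y : Fin n → ℝ)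
    {lam : ℝ} (hlam : 0 ≤ lam) (w : Fin m → ℝ) :
    ridgeMin A y lam ≤ (1 / 2) * sqnorm (A *ᵥ w - y) + (lam / 2) * sqnorm w :=
  ciInf_le (ridge_bdd A y hlam) w

/-- In the setting of the consistency theorem (compact `𝒫`, continuous `M` with
uniform full column rank), if `λ_k ↓ 0` and `p_k` minimizes `f_{λ_k}`, then
`f_u(p_k) → min_{p∈𝒫} f_u(p)` as `k → ∞`. -/
theorem ridge_objective_value_convergence (d n m : ℕ)
    (P : Set (Fin d → ℝ)) (hPc : IsCompact P) (hPne : P.Nonempty)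
    (M : (Fin d → ℝ) → Matrix (Fin n) (Fin m) ℝ) (hM : ContinuousOn M P)
    (hrank : ∀ p ∈ P, (M p).rank = m)
    (y : Fin n → ℝ)
    (lamSeq : ℕ → ℝ) (hpos : ∀ k, 0 < lamSeq k) (hanti : Antitone lamSeq)
    (hlim : Tendsto lamSeq atTop (𝓝 0))
    (pk : ℕ → (Fin d → ℝ)) (hpkP : ∀ k, pk k ∈ P)
    (hmin : ∀ k, ∀ q ∈ P, ridgeMin (M (pk k)) y (lamSeq k) ≤ ridgeMin (M q) y (lamSeq k)) :
    Tendsto (fun k => lsqMin (M (pk k)) y) atTop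
      (𝓝 (sInf ((fun p => lsqMin (M p) y) '' P))) := by
  set S : Set ℝ := (fun p => lsqMin (M p) y) '' P with hS
  have hSne : S.Nonempty := hPne.image _
  have hSbdd : BddBelow S := by
    refine ⟨0, ?_⟩
    rintro x ⟨p, hp, rfl⟩
    exact lsqMin_nonneg _ _
  have hlow : ∀ k, sInf S ≤ lsqMin (M (pk k)) y := fun k =>
    csInf_le hSbdd ⟨pk k, hpkP k, rfl⟩
  rw [Metric.tendsto_atTop]
  intro ε hε
  -- near-minimizing parameter
  obtain ⟨x, ⟨p, hpP, rfl⟩, hx⟩ := Real.lt_sInf_add_pos hSne (show (0:ℝ) < ε / 3 by linarith)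
  -- near-minimizing weight at p
  have : lsqMin (M p) y < lsqMin (M p) y + ε / 3 := by linarith
  obtain ⟨w, hw⟩ := exists_lt_of_ciInf_lt this
  -- eventually λ_k‖w‖²/2 < ε/3
  have htend : Tendsto (fun k => (lamSeq k / 2) * sqnorm w) atTop (𝓝 0) := by
    have := (hlim.div_const 2).mul_const (sqnorm w)
    simpa using this
  have hev : ∀ᶠ k in atTop, (lamSeq k / 2) * sqnorm w < ε / 3 := by
    have := htend.eventually (eventually_lt_nhds (show (0:ℝ) < ε / 3 by linarith))
    simpa using this
  obtain ⟨N, hN⟩ := hev.exists_forall_of_atTop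
  refine ⟨N, fun k hk => ?_⟩
  have hlam := (hpos k).le
  have chain : lsqMin (M (pk k)) y < sInf S + ε := by
    calc lsqMin (M (pk k)) y ≤ ridgeMin (M (pk k)) y (lamSeq k) :=
          lsqMin_le_ridgeMin _ _ hlam
      _ ≤ ridgeMin (M p) y (lamSeq k) := hmin k p hpP
      _ ≤ (1 / 2) * sqnorm ((M p) *ᵥ w - y) + (lamSeq k / 2) * sqnorm w :=
          ridgeMin_le _ _ hlam w
      _ < sInf S + ε := by
          have := hN k hk
          linarith
  have := hlow k
  rw [Real.dist_eq, abs_lt]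
  constructor <;> linarith
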